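/- Let k ≥ 1, u, y : Fin k → ℕ with ∑_{l ≤ j} u l ≤ ∑_{l ≤ j} y l for all j, and let V(u,y) be as above. Suppose v ∈ V(u,y), v ≠ v*, let j be the largest index with v j < v* j, and let i < j be the largest index below j with v i > 0 (such i exists). Define T(v) by T(v) j = v j + 1, T(v) i = v i − 1, and T(v) l = v l otherwise. Then T(v) ∈ V(u,y). -/
import Mathlib


-- downward induction on Fin k
lemma down_ind {k : ℕ} (P : Fin k → Prop)
    (hlast : ∀ m : Fin k, m.val + 1 = k → P m)
    (hstep : ∀ (m m' : Fin k), m'.val = m.val + 1 → P m' → P m) :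
    ∀ m, P m := by
  have key : ∀ d (m : Fin k), k - m.val ≤ d + 1 → P m := by
    intro d
    induction d with
    | zero => intro m hm; exact hlast m (by have := m.isLt; omega)
    | succ d ih =>
      intro m hm
      by_cases h : m.val + 1 = k
      · exact hlast m h
      · have hlt : m.val + 1 < k := by have := m.isLt; omega
        exact hstep m ⟨m.val + 1, hlt⟩ rfl (ih _ (by simp; omega))
  intro m; exact key k m (by have := m.isLt; omega)

lemma Ioi_last {k : ℕ} (m : Fin k) (h : m.val + 1 = k) : Finset.Ioi m = ∅ := by
  ext x
  simp only [Finset.mem_Ioi, Finset.notMem_empty, iff_false, not_lt, Fin.le_def, Fin.lt_def]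
  have := x.isLt; omega

lemma Ioi_step {k : ℕ} (m m' : Fin k) (h : m'.val = m.val + 1) :
    Finset.Ioi m = insert m' (Finset.Ioi m') := by
  ext x
  simp only [Finset.mem_Ioi, Finset.mem_insert, Fin.lt_def, Fin.ext_iff]
  omega

lemma split_sum {k : ℕ} (m : Fin k) (f : Fin k → ℕ) :
    (∑ l ∈ Finset.Iic m, f l) + (∑ l ∈ Finset.Ioi m, f l) = ∑ l : Fin k, f l := by
  rw [← Finset.sum_union]
  · congr 1
    ext x
    simp [Finset.mem_Iic, Finset.mem_Ioi, le_or_gt]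
  · rw [Finset.disjoint_left]
    intro a ha ha'
    simp [Finset.mem_Iic] at ha
    simp [Finset.mem_Ioi] at ha'
    exact absurd ha (not_le.mpr ha')

/-- suffix sums of `vstar` are at most suffix sums of `u`. -/
lemma lemA {k : ℕ} (u y vstar : Fin k → ℕ)
    (hvstar : ∀ j : Fin k,
      vstar j = min (y j)
        (u j + ((∑ l ∈ Finset.Ioi j, u l) - (∑ l ∈ Finset.Ioi j, vstar l)))) :
    ∀ m : Fin k, (∑ l ∈ Finset.Ioi m, vstar l) ≤ (∑ l ∈ Finset.Ioi m, u l) := by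
  refine down_ind _ (fun m hm => ?_) (fun m m' hm ih => ?_)
  · rw [Ioi_last m hm]; simp
  · rw [Ioi_step m m' hm, Finset.sum_insert (by simp), Finset.sum_insert (by simp)]
    have h1 : vstar m' ≤ u m' + ((∑ l ∈ Finset.Ioi m', u l) - (∑ l ∈ Finset.Ioi m', vstar l)) := by
      rw [hvstar m']; exact min_le_right _ _
    omega

/-- suffix sums of any feasible `v` are at most suffix sums of `vstar`. -/
lemma lemB {k : ℕ} (u y v vstar : Fin k → ℕ)
    (hvstar : ∀ j : Fin k,
      vstar j = min (y j)
        (u j + ((∑ l ∈ Finset.Ioi j, u l) - (∑ l ∈ Finset.Ioi j, vstar l))))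
    (hv1 : ∀ m : Fin k, v m ≤ y m)
    (hv2 : ∀ m : Fin k, (∑ l ∈ Finset.Iic m, u l) ≤ (∑ l ∈ Finset.Iic m, v l))
    (hv3 : (∑ l : Fin k, v l) = (∑ l : Fin k, u l)) :
    ∀ m : Fin k, (∑ l ∈ Finset.Ioi m, v l) ≤ (∑ l ∈ Finset.Ioi m, vstar l) := by
  have hIoi_uv : ∀ m : Fin k, (∑ l ∈ Finset.Ioi m, v l) ≤ (∑ l ∈ Finset.Ioi m, u l) := by
    intro m
    have h1 := split_sum m u
    have h2 := split_sum m v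
    have h3 := hv2 m
    omega
  refine down_ind _ (fun m hm => ?_) (fun m m' hm ih => ?_)
  · rw [Ioi_last m hm]; simp
  · have huv := hIoi_uv m
    rw [Ioi_step m m' hm, Finset.sum_insert (by simp), Finset.sum_insert (by simp)] at huv ⊢
    have hA := lemA u y vstar hvstar m'
    have hy := hv1 m'
    have hmin := hvstar m'
    rw [Nat.min_def] at hmin
    split at hmin <;> omega


/-- Let `v ∈ V(u,y)`, `v ≠ v*`, let `j` be the largest index with
`v j < v* j`, and let `i < j` be the largest index below `j` with `v i > 0`.  Then the
transformed vector `T(v)` (with `T(v) j = v j + 1`, `T(v) i = v i − 1`, unchanged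
elsewhere) is again in `V(u,y)`. -/
theorem stmt4 (k : ℕ) (hk : 1 ≤ k) (u y v vstar : Fin k → ℕ)
    (hu : ∀ j : Fin k, (∑ l ∈ Finset.Iic j, u l) ≤ (∑ l ∈ Finset.Iic j, y l))
    (hvstar : ∀ j : Fin k,
      vstar j = min (y j)
        (u j + ((∑ l ∈ Finset.Ioi j, u l) - (∑ l ∈ Finset.Ioi j, vstar l))))
    (hv1 : ∀ m : Fin k, v m ≤ y m)
    (hv2 : ∀ m : Fin k, (∑ l ∈ Finset.Iic m, u l) ≤ (∑ l ∈ Finset.Iic m, v l))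
    (hv3 : (∑ l : Fin k, v l) = (∑ l : Fin k, u l))
    (hne : v ≠ vstar)
    (j : Fin k) (hj : v j < vstar j)
    (hjmax : ∀ l : Fin k, j < l → ¬ v l < vstar l)
    (i : Fin k) (hij : i < j) (hipos : 0 < v i)
    (himax : ∀ l : Fin k, i < l → l < j → v l = 0) :
    (∀ m : Fin k,
      (if m = j then v m + 1 else if m = i then v m - 1 else v m) ≤ y m) ∧
    (∀ m : Fin k, (∑ l ∈ Finset.Iic m, u l) ≤
      (∑ l ∈ Finset.Iic m, (if l = j then v l + 1 else if l = i then v l - 1 else v l))) ∧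
    (∑ l : Fin k, (if l = j then v l + 1 else if l = i then v l - 1 else v l))
      = (∑ l : Fin k, u l) := by
  have hinej : i ≠ j := ne_of_lt hij
  -- pointwise identity avoiding ℕ-subtraction
  have hpoint : ∀ l : Fin k,
      (if l = j then v l + 1 else if l = i then v l - 1 else v l) + (if l = i then 1 else 0)
        = v l + (if l = j then 1 else 0) := by
    intro l
    by_cases hlj : l = j
    · subst hlj
      simp [Ne.symm hinej]
    · by_cases hli : l = i
      · subst hli
        simp [hlj]
        omega
      · simp [hlj, hli]
  -- summed identity over any finset
  have hsum : ∀ s : Finset (Fin k),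
      (∑ l ∈ s, (if l = j then v l + 1 else if l = i then v l - 1 else v l))
          + (if i ∈ s then 1 else 0)
        = (∑ l ∈ s, v l) + (if j ∈ s then 1 else 0) := by
    intro s
    have : (∑ l ∈ s, ((if l = j then v l + 1 else if l = i then v l - 1 else v l)
            + if l = i then 1 else 0))
        = (∑ l ∈ s, (v l + if l = j then 1 else 0)) :=
      Finset.sum_congr rfl (fun l _ => hpoint l)
    rwa [Finset.sum_add_distrib, Finset.sum_add_distrib,
      Finset.sum_ite_eq' s i (fun _ => 1), Finset.sum_ite_eq' s j (fun _ => 1)] at this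
  have hvstarj_y : vstar j ≤ y j := by rw [hvstar j]; exact min_le_left _ _
  -- strict prefix inequality for i ≤ m < j
  have hstrict : ∀ m : Fin k, i ≤ m → m < j →
      (∑ l ∈ Finset.Iic m, u l) < (∑ l ∈ Finset.Iic m, v l) := by
    intro m him hmj
    have hsub : Finset.Ici j ⊆ Finset.Ioi m := by
      intro x hx
      simp only [Finset.mem_Ici, Fin.le_def] at hx
      simp only [Finset.mem_Ioi, Fin.lt_def]
      have := Fin.lt_def.mp hmj
      omega
    have hv_eq : (∑ l ∈ Finset.Ici j, v l) = (∑ l ∈ Finset.Ioi m, v l) := by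
      refine Finset.sum_subset hsub (fun x hx hnx => ?_)
      simp only [Finset.mem_Ioi] at hx
      simp only [Finset.mem_Ici, not_le] at hnx
      exact himax x (lt_of_le_of_lt him hx) hnx
    have hu_le : (∑ l ∈ Finset.Ici j, u l) ≤ (∑ l ∈ Finset.Ioi m, u l) :=
      Finset.sum_le_sum_of_subset hsub
    have hIci_v : (∑ l ∈ Finset.Ici j, v l) = v j + ∑ l ∈ Finset.Ioi j, v l := by
      rw [← Finset.Ioi_insert, Finset.sum_insert (by simp)]
    have hIci_u : (∑ l ∈ Finset.Ici j, u l) = u j + ∑ l ∈ Finset.Ioi j, u l := by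
      rw [← Finset.Ioi_insert, Finset.sum_insert (by simp)]
    have hB := lemB u y v vstar hvstar hv1 hv2 hv3 j
    have hA := lemA u y vstar hvstar j
    have hminj : vstar j ≤ u j + ((∑ l ∈ Finset.Ioi j, u l) - (∑ l ∈ Finset.Ioi j, vstar l)) := by
      rw [hvstar j]; exact min_le_right _ _
    -- suffix strict inequality
    have hsuf : (∑ l ∈ Finset.Ioi m, v l) < (∑ l ∈ Finset.Ioi m, u l) := by omega
    have h1 := split_sum m u
    have h2 := split_sum m v
    omega
  refine ⟨?_, ?_, ?_⟩
  · intro m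
    by_cases hmj : m = j
    · subst hmj
      rw [if_pos rfl]
      omega
    · by_cases hmi : m = i
      · subst hmi
        simp only [if_neg hmj, if_pos rfl]
        exact le_trans (Nat.sub_le _ _) (hv1 m)
      · simp only [if_neg hmj, if_neg hmi]; exact hv1 m
  · intro m
    have hs := hsum (Finset.Iic m)
    have hmemi : (i ∈ Finset.Iic m) ↔ i ≤ m := Finset.mem_Iic
    have hmemj : (j ∈ Finset.Iic m) ↔ j ≤ m := Finset.mem_Iic
    by_cases hjm : j ≤ m
    · have him : i ≤ m := le_trans (le_of_lt hij) hjm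
      rw [if_pos (hmemi.mpr him), if_pos (hmemj.mpr hjm)] at hs
      have := hv2 m
      omega
    · by_cases him : i ≤ m
      · rw [if_pos (hmemi.mpr him), if_neg (fun h => hjm (hmemj.mp h))] at hs
        have := hstrict m him (lt_of_not_ge hjm)
        omega
      · rw [if_neg (fun h => him (hmemi.mp h)), if_neg (fun h => hjm (hmemj.mp h))] at hs
        have := hv2 m
        omega
  · have hs := hsum Finset.univ
    rw [if_pos (Finset.mem_univ i), if_pos (Finset.mem_univ j)] at hs
    omega
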